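/- arXiv:1412.7787 — 2 statements merged into one kernel-verified Lean document; each statement's English description precedes it below -/
import Mathlib

section
/- For the Klein–Gordon system the partially strong transparency condition holds with exponent 1/2: there exists a constant C > 0 (depending only on d and λ) such that for all ξ ∈ ℝ^d, |Π₁(ξ) B(e₁) Π₃(ξ)| ≤ C |λ₁(ξ) − 1|^{1/2} and |Π₂(ξ) B(e_{−1}) Π₃(ξ)| ≤ C |λ₂(ξ) + 1|^{1/2}, where |·| denotes a matrix norm and B(e_p)V := B(e_p, V). -/
/- STATEMENT 16: the partially strong transparency condition with exponent 1/2
for the Klein–Gordon system: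
|Π₁(ξ)B(e₁)Π₃(ξ)| ≤ C|λ₁(ξ)−1|^{1/2} and |Π₂(ξ)B(e_{−1})Π₃(ξ)| ≤ C|λ₂(ξ)+1|^{1/2}.
As matrix norm we take the Frobenius norm. -/

noncomputable section

open Complex Matrix

abbrev KGIdx (d : ℕ) := Fin d ⊕ (Unit ⊕ Unit)

def sqn {d : ℕ} (ξ : Fin d → ℝ) : ℝ := ∑ i, ξ i ^ 2

def jap {d : ℕ} (ξ : Fin d → ℝ) : ℝ := Real.sqrt (1 + sqn ξ)

def lam1 {d : ℕ} (ξ : Fin d → ℝ) : ℝ := jap ξ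
def lam2 {d : ℕ} (ξ : Fin d → ℝ) : ℝ := -jap ξ

/-- e₁ = (0_d, −i, 1). -/
def KGe1 {d : ℕ} : KGIdx d → ℂ := fun i =>
  match i with
  | .inr (.inl _) => -Complex.I
  | .inr (.inr _) => 1
  | _ => 0

/-- e_{−1} = (0_d, i, 1). -/
def KGem1 {d : ℕ} : KGIdx d → ℂ := fun i =>
  match i with
  | .inr (.inl _) => Complex.I
  | .inr (.inr _) => 1
  | _ => 0

/-- The matrix of V ↦ B(e, V) where B((w₁,v₁,u₁),(w₂,v₂,u₂)) = −λ(0, u₁u₂, 0):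
only the (v-row, u-column) entry is nonzero, equal to −λ·e_u. -/
def KGBmat {d : ℕ} (lam : ℝ) (e : KGIdx d → ℂ) : Matrix (KGIdx d) (KGIdx d) ℂ := fun i j =>
  match i, j with
  | .inr (.inl _), .inr (.inr _) => -(lam : ℂ) * e (.inr (.inr ()))
  | _, _ => 0

def KGPi12 {d : ℕ} (l : ℝ) (ξ : Fin d → ℝ) : Matrix (KGIdx d) (KGIdx d) ℂ := fun i j =>
  (1 / 2 : ℂ) *
    match i, j with
    | .inl a, .inl b => ((ξ a * ξ b / l ^ 2 : ℝ) : ℂ)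
    | .inl a, .inr (.inl _) => ((ξ a / l : ℝ) : ℂ)
    | .inl a, .inr (.inr _) => -Complex.I * ((ξ a / l ^ 2 : ℝ) : ℂ)
    | .inr (.inl _), .inl b => ((ξ b / l : ℝ) : ℂ)
    | .inr (.inl _), .inr (.inl _) => 1
    | .inr (.inl _), .inr (.inr _) => -Complex.I * ((1 / l : ℝ) : ℂ)
    | .inr (.inr _), .inl b => Complex.I * ((ξ b / l ^ 2 : ℝ) : ℂ)
    | .inr (.inr _), .inr (.inl _) => Complex.I * ((1 / l : ℝ) : ℂ)
    | .inr (.inr _), .inr (.inr _) => ((1 / l ^ 2 : ℝ) : ℂ)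

def KGPi3 {d : ℕ} (ξ : Fin d → ℝ) : Matrix (KGIdx d) (KGIdx d) ℂ := fun i j =>
  (((d : ℝ) + sqn ξ : ℝ) : ℂ)⁻¹ *
    match i, j with
    | .inl a, .inl b => if a = b then 1 else 0
    | .inl a, .inr (.inr _) => -Complex.I * (ξ a : ℂ)
    | .inr (.inr _), .inl b => Complex.I * (ξ b : ℂ)
    | .inr (.inr _), .inr (.inr _) => ((sqn ξ : ℝ) : ℂ)
    | _, _ => 0


/-- Frobenius norm of a complex matrix. -/
def matNorm {n : Type*} [Fintype n] (M : Matrix n n ℂ) : ℝ :=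
  Real.sqrt (∑ i, ∑ j, Complex.normSq (M i j))

lemma sqn_nonneg {d : ℕ} (ξ : Fin d → ℝ) : 0 ≤ sqn ξ :=
  Finset.sum_nonneg fun i _ => sq_nonneg _

/-- Entry formula for the triple product. -/
lemma KG_entry {d : ℕ} (lam l : ℝ) (ξ : Fin d → ℝ) (e : KGIdx d → ℂ) (i j : KGIdx d) :
    (KGPi12 l ξ * KGBmat lam e * KGPi3 ξ) i j
      = KGPi12 l ξ i (Sum.inr (Sum.inl ())) * (-(lam:ℂ) * e (Sum.inr (Sum.inr ())))
        * KGPi3 ξ (Sum.inr (Sum.inr ())) j := by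
  have hAB : ∀ k, (KGPi12 l ξ * KGBmat lam e) i k
      = if k = Sum.inr (Sum.inr ()) then
          KGPi12 l ξ i (Sum.inr (Sum.inl ())) * (-(lam:ℂ) * e (Sum.inr (Sum.inr ()))) else 0 := by
    intro k
    rw [Matrix.mul_apply, Fintype.sum_sum_type, Fintype.sum_sum_type]
    rcases k with b | (u|u) <;> simp [KGBmat]
  rw [Matrix.mul_apply, Fintype.sum_sum_type, Fintype.sum_sum_type]
  simp [hAB]

lemma KG_colsum {d : ℕ} (l : ℝ) (ξ : Fin d → ℝ) (hl : l ^ 2 = 1 + sqn ξ) :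
    ∑ i, Complex.normSq (KGPi12 l ξ i (Sum.inr (Sum.inl ()))) = 1/2 := by
  have hs := sqn_nonneg ξ
  have hl0 : l ≠ 0 := by intro h; rw [h] at hl; simp at hl; nlinarith
  rw [Fintype.sum_sum_type, Fintype.sum_sum_type]
  simp only [KGPi12, Complex.normSq_mul, Complex.normSq_ofReal, Finset.univ_unique,
    Finset.sum_singleton, Complex.normSq_one, Complex.normSq_I, Complex.normSq_neg]
  have h12 : Complex.normSq (1/2 : ℂ) = 1/4 := by norm_num [Complex.normSq_apply]
  have hsum : ∑ x : Fin d, (ξ x / l * (ξ x / l)) = sqn ξ / l ^ 2 := by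
    simp_rw [div_mul_div_comm, ← sq, sqn, ← Finset.sum_div]
  rw [← Finset.mul_sum, hsum, h12]
  have hll : l * l = 1 + sqn ξ := by rw [← hl]; ring
  have h2 : (1:ℝ)/l * (1/l) = 1/(1+sqn ξ) := by rw [div_mul_div_comm, one_mul, hll]
  rw [hl, h2]
  have h0 : (1:ℝ) + sqn ξ ≠ 0 := by positivity
  field_simp
  ring

lemma KG_rowsum {d : ℕ} (ξ : Fin d → ℝ) :
    ∑ j, Complex.normSq (KGPi3 ξ (Sum.inr (Sum.inr ())) j)
      = ((d:ℝ) + sqn ξ)⁻¹ ^ 2 * (sqn ξ + sqn ξ ^ 2) := by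
  rw [Fintype.sum_sum_type, Fintype.sum_sum_type]
  simp only [KGPi3, Complex.normSq_mul, Complex.normSq_ofReal, Finset.univ_unique,
    Finset.sum_singleton, Complex.normSq_I, Complex.normSq_zero, map_inv₀]
  simp only [one_mul, mul_zero, zero_add, ← Finset.mul_sum]
  have hsum : ∑ x : Fin d, (ξ x * ξ x) = sqn ξ := by simp_rw [sqn, sq]
  rw [hsum, mul_inv]
  ring

/-- Key estimate. -/
lemma KG_key {d : ℕ} (hd : 1 ≤ d) (lam l : ℝ) (ξ : Fin d → ℝ)
    (hl : l ^ 2 = 1 + sqn ξ) (e : KGIdx d → ℂ) (he : e (Sum.inr (Sum.inr ())) = 1) :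
    matNorm (KGPi12 l ξ * KGBmat lam e * KGPi3 ξ)
      ≤ (|lam| + 1) * Real.sqrt (jap ξ - 1) := by
  have hs := sqn_nonneg ξ
  set s := sqn ξ with hsdef
  -- total sum computation
  have hsumsum : ∑ i, ∑ j, Complex.normSq ((KGPi12 l ξ * KGBmat lam e * KGPi3 ξ) i j)
      = (1/2) * (lam * lam) * (((d:ℝ) + s)⁻¹ ^ 2 * (s + s ^ 2)) := by
    have : ∀ i j, Complex.normSq ((KGPi12 l ξ * KGBmat lam e * KGPi3 ξ) i j)
        = Complex.normSq (KGPi12 l ξ i (Sum.inr (Sum.inl ()))) * (lam * lam) *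
            Complex.normSq (KGPi3 ξ (Sum.inr (Sum.inr ())) j) := by
      intro i j
      rw [KG_entry, Complex.normSq_mul, Complex.normSq_mul, he, mul_one,
        Complex.normSq_neg, Complex.normSq_ofReal]
    simp_rw [this, ← Finset.mul_sum, ← Finset.sum_mul, KG_colsum l ξ hl, KG_rowsum ξ]
    rfl
  rw [matNorm, hsumsum]
  -- basic facts
  have hj1 : 1 ≤ jap ξ := by
    rw [jap]; rw [Real.one_le_sqrt]; linarith
  have hj2 : jap ξ ^ 2 = 1 + s := Real.sq_sqrt (by linarith)
  have hjle : jap ξ ≤ 1 + s := by nlinarith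
  have hD1 : (1:ℝ) + s ≤ (d:ℝ) + s := by
    have : (1:ℝ) ≤ (d:ℝ) := by exact_mod_cast hd
    linarith
  have hD0 : (0:ℝ) < (d:ℝ) + s := by linarith
  have hA : lam ^ 2 ≤ (|lam| + 1) ^ 2 := by nlinarith [abs_nonneg lam, _root_.sq_abs lam]
  -- the squared inequality
  have hX : (1/2) * (lam * lam) * (((d:ℝ) + s)⁻¹ ^ 2 * (s + s ^ 2))
      ≤ (|lam| + 1) ^ 2 * (jap ξ - 1) := by
    have hmid : (1/2) * (lam * lam) * (((d:ℝ) + s)⁻¹ ^ 2 * (s + s ^ 2))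
        ≤ lam ^ 2 * s / (2 * (1 + s)) := by
      have hDinv : ((d:ℝ) + s)⁻¹ ≤ ((1:ℝ) + s)⁻¹ := by
        apply inv_anti₀ (by linarith) hD1
      have h1 : (1/2) * (lam * lam) * (((d:ℝ) + s)⁻¹ ^ 2 * (s + s ^ 2))
          ≤ (1/2) * (lam * lam) * (((1:ℝ) + s)⁻¹ ^ 2 * (s + s ^ 2)) := by
        gcongr <;> first
          | positivity
          | nlinarith [sq_nonneg lam]
          | exact hDinv
      have h2 : (1/2) * (lam * lam) * (((1:ℝ) + s)⁻¹ ^ 2 * (s + s ^ 2))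
          = lam ^ 2 * s / (2 * (1 + s)) := by
        have h0 : (1:ℝ) + s ≠ 0 := by positivity
        field_simp
      linarith
    have hjd : jap ξ - 1 = s / (jap ξ + 1) := by
      rw [eq_div_iff (by linarith)]; nlinarith
    have hstep : lam ^ 2 * s / (2 * (1 + s)) ≤ (|lam| + 1) ^ 2 * (s / (jap ξ + 1)) := by
      rw [mul_div_assoc' ((|lam| + 1)^2) s _, div_le_div_iff₀ (by linarith) (by linarith)]
      have hj2' : jap ξ + 1 ≤ 2 * (1 + s) := by linarith
      calc lam ^ 2 * s * (jap ξ + 1) ≤ lam ^ 2 * s * (2 * (1 + s)) := by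
            apply mul_le_mul_of_nonneg_left hj2' (by positivity)
        _ ≤ (|lam| + 1) ^ 2 * s * (2 * (1 + s)) := by
            apply mul_le_mul_of_nonneg_right _ (by linarith)
            apply mul_le_mul_of_nonneg_right hA hs
    rw [hjd]; linarith
  calc Real.sqrt ((1/2) * (lam * lam) * (((d:ℝ) + s)⁻¹ ^ 2 * (s + s ^ 2)))
      ≤ Real.sqrt ((|lam| + 1) ^ 2 * (jap ξ - 1)) := Real.sqrt_le_sqrt hX
    _ = (|lam| + 1) * Real.sqrt (jap ξ - 1) := by
        rw [Real.sqrt_mul (sq_nonneg _), Real.sqrt_sq (by positivity)]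

theorem stmt16 (d : ℕ) (hd : 1 ≤ d) (lam : ℝ) :
    ∃ C > 0, ∀ ξ : Fin d → ℝ,
      matNorm (KGPi12 (lam1 ξ) ξ * KGBmat lam KGe1 * KGPi3 ξ)
          ≤ C * |lam1 ξ - 1| ^ ((1 : ℝ) / 2) ∧
      matNorm (KGPi12 (lam2 ξ) ξ * KGBmat lam KGem1 * KGPi3 ξ)
          ≤ C * |lam2 ξ + 1| ^ ((1 : ℝ) / 2) := by
  refine ⟨|lam| + 1, by positivity, fun ξ => ?_⟩
  have hs := sqn_nonneg ξ
  have hj1 : 1 ≤ jap ξ := by rw [jap, Real.one_le_sqrt]; linarith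
  have hj2 : jap ξ ^ 2 = 1 + sqn ξ := Real.sq_sqrt (by linarith)
  constructor
  · have h1 : |lam1 ξ - 1| = jap ξ - 1 := abs_of_nonneg (by rw [lam1]; linarith)
    rw [h1, ← Real.sqrt_eq_rpow]
    exact KG_key hd lam (lam1 ξ) ξ (by rw [lam1]; exact hj2) KGe1 rfl
  · have h1 : |lam2 ξ + 1| = jap ξ - 1 := by
      rw [lam2, abs_of_nonpos (by linarith)]; ring
    rw [h1, ← Real.sqrt_eq_rpow]
    exact KG_key hd lam (lam2 ξ) ξ (by rw [lam2]; rw [neg_pow]; simp [hj2]) KGem1 rfl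

end
end

section
/- For the Klein–Gordon system with λ ≠ 0, the strong transparency condition fails at the resonance ξ = 0: the quotient |Π₁(ξ) B(e₁) Π₃(ξ)| / |λ₁(ξ) − 1| is unbounded as ξ → 0 on ℝ^d \ {0}; in particular there is no constant C with |Π₁(ξ) B(e₁) Π₃(ξ)| ≤ C |λ₁(ξ) − 1| for all ξ ∈ ℝ^d. The same unboundedness holds for |Π₂(ξ) B(e_{−1}) Π₃(ξ)| / |λ₂(ξ) + 1|. -/
/- STATEMENT 17: failure of the strong transparency condition for the Klein–Gordon
system (λ ≠ 0): the quotient |Π₁(ξ)B(e₁)Π₃(ξ)| / |λ₁(ξ)−1| is unbounded as ξ → 0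
on ℝ^d \ {0}; in particular no constant C gives |Π₁(ξ)B(e₁)Π₃(ξ)| ≤ C|λ₁(ξ)−1| for
all ξ; and the same for |Π₂(ξ)B(e_{−1})Π₃(ξ)| / |λ₂(ξ)+1|.
As matrix norm we take the Frobenius norm. -/

noncomputable section

open Complex Matrix

lemma entry_eq {d : ℕ} (lam l : ℝ) (ξ : Fin d → ℝ) (e : KGIdx d → ℂ) (a : Fin d) :
    (KGPi12 l ξ * KGBmat lam e * KGPi3 ξ) (.inr (.inl ())) (.inl a) =
      (1/2 : ℂ) * (-(lam:ℂ) * e (.inr (.inr ()))) *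
        ((((d : ℝ) + sqn ξ : ℝ) : ℂ)⁻¹ * (Complex.I * (ξ a : ℂ))) := by
  simp [Matrix.mul_apply, Fintype.sum_sum_type, KGPi12, KGBmat, KGPi3]

lemma matNorm_ge {n : Type*} [Fintype n] (M : Matrix n n ℂ) (i j : n) :
    ‖M i j‖ ≤ matNorm M := by
  rw [Complex.norm_def, matNorm]
  apply Real.sqrt_le_sqrt
  calc Complex.normSq (M i j) ≤ ∑ j', Complex.normSq (M i j') :=
        Finset.single_le_sum (fun _ _ => Complex.normSq_nonneg _) (Finset.mem_univ _)
    _ ≤ ∑ i', ∑ j', Complex.normSq (M i' j') :=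
        Finset.single_le_sum (fun _ _ => Finset.sum_nonneg fun _ _ => Complex.normSq_nonneg _)
          (Finset.mem_univ _)

set_option maxHeartbeats 1000000 in
lemma unbdd {d : ℕ} (hd : 1 ≤ d) (lam : ℝ) (hlam : lam ≠ 0)
    (L : (Fin d → ℝ) → ℝ) (e : KGIdx d → ℂ) (he : e (.inr (.inr ())) = 1)
    (M δ : ℝ) (hδ : 0 < δ) :
    ∃ ξ : Fin d → ℝ, ξ ≠ 0 ∧ Real.sqrt (sqn ξ) < δ ∧
      M < matNorm (KGPi12 (L ξ) ξ * KGBmat lam e * KGPi3 ξ) / (jap ξ - 1) := by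
  have hlam' : 0 < |lam| := abs_pos.mpr hlam
  have hMd : (0:ℝ) < ((d:ℝ) + 1) * (|M| + 1) := by positivity
  set c : ℝ := |lam| / (((d:ℝ) + 1) * (|M| + 1)) with hc
  have hc0 : 0 < c := by positivity
  set t : ℝ := (1/2) * min δ (min 1 c) with htd
  have ht0 : 0 < t := by
    have : 0 < min δ (min 1 c) := lt_min hδ (lt_min one_pos hc0)
    positivity
  have htδ : t < δ := by
    have h1 : min δ (min 1 c) ≤ δ := min_le_left _ _
    linarith
  have ht1 : t ≤ 1 := by
    have h1 : min δ (min 1 c) ≤ 1 := (min_le_right _ _).trans (min_le_left _ _)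
    linarith
  have htc : t ≤ c / 2 := by
    have h1 : min δ (min 1 c) ≤ c := (min_le_right _ _).trans (min_le_right _ _)
    linarith
  have a : Fin d := ⟨0, hd⟩
  set ξ : Fin d → ℝ := Pi.single a t with hξ
  have hξa : ξ a = t := by rw [hξ]; simp
  have hsqn : sqn ξ = t ^ 2 := by
    simp [sqn, hξ, Pi.single_apply, apply_ite (· ^ (2:ℕ))]
  have hne : ξ ≠ 0 := by
    intro h
    have h0 : ξ a = 0 := congrFun h a
    rw [hξa] at h0
    exact ht0.ne' h0
  have hsmall : Real.sqrt (sqn ξ) < δ := by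
    rw [hsqn, Real.sqrt_sq ht0.le]; exact htδ
  refine ⟨ξ, hne, hsmall, ?_⟩
  have hdt : (0:ℝ) < (d:ℝ) + t ^ 2 := by positivity
  -- entry lower bound
  have habs : ‖((KGPi12 (L ξ) ξ * KGBmat lam e * KGPi3 ξ) (.inr (.inl ())) (.inl a))‖
      = |lam| * t / (2 * ((d:ℝ) + t ^ 2)) := by
    rw [entry_eq, he, hsqn, hξa]
    have hrw : (1/2 : ℂ) * (-(lam:ℂ) * 1) * ((((d:ℝ) + t ^ 2 : ℝ):ℂ)⁻¹ * (Complex.I * (t:ℂ)))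
        = (((-lam * ((d:ℝ) + t ^ 2)⁻¹ * t) / 2 : ℝ) : ℂ) * Complex.I := by
      push_cast
      ring
    rw [hrw, norm_mul, Complex.norm_I, Complex.norm_real, Real.norm_eq_abs, mul_one, abs_div, abs_mul, abs_mul,
      abs_neg, abs_inv, abs_of_pos hdt, abs_of_pos ht0]
    rw [show |(2:ℝ)| = 2 by norm_num]
    field_simp
  have hA : |lam| * t / (2 * ((d:ℝ) + t ^ 2)) ≤
      matNorm (KGPi12 (L ξ) ξ * KGBmat lam e * KGPi3 ξ) := by
    rw [← habs]; exact matNorm_ge _ _ _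
  -- denominator bounds
  have hjap1 : 1 < jap ξ := by
    rw [jap, hsqn]
    exact (Real.lt_sqrt (by positivity)).mpr (by nlinarith)
  have hjap2 : jap ξ - 1 ≤ t ^ 2 / 2 := by
    rw [jap, hsqn]
    have : Real.sqrt (1 + t ^ 2) ≤ 1 + t ^ 2 / 2 := by
      rw [show (1:ℝ) + t ^ 2 / 2 = Real.sqrt ((1 + t ^ 2 / 2) ^ 2) from
        (Real.sqrt_sq (by positivity)).symm]
      exact Real.sqrt_le_sqrt (by nlinarith)
    linarith
  have hpos : 0 < jap ξ - 1 := by linarith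
  rw [lt_div_iff₀ hpos]
  have key : M * (jap ξ - 1) ≤ |M| * (t ^ 2 / 2) := by
    calc M * (jap ξ - 1) ≤ |M| * (jap ξ - 1) :=
          mul_le_mul_of_nonneg_right (le_abs_self M) hpos.le
      _ ≤ |M| * (t ^ 2 / 2) := mul_le_mul_of_nonneg_left hjap2 (abs_nonneg M)
  have key2 : |M| * (t ^ 2 / 2) < |lam| * t / (2 * ((d:ℝ) + t ^ 2)) := by
    rw [lt_div_iff₀ (by positivity)]
    have hcc : c * (((d:ℝ) + 1) * (|M| + 1)) = |lam| := div_mul_cancel₀ _ hMd.ne'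
    have ht2 : t ^ 2 ≤ t := by nlinarith
    have hd1 : (d:ℝ) + t ^ 2 ≤ (d:ℝ) + 1 := by nlinarith
    have e2 : (|M| + 1) * (((d:ℝ) + 1)) * t ≤ (|M| + 1) * (((d:ℝ) + 1)) * (c / 2) :=
      mul_le_mul_of_nonneg_left htc (by positivity)
    have e3 : (|M| + 1) * (((d:ℝ) + 1)) * (c / 2) = |lam| / 2 := by linear_combination hcc / 2
    have key3 : |M| * t * ((d:ℝ) + 1) < |lam| := by nlinarith [ht0, abs_nonneg M]
    nlinarith [mul_lt_mul_of_pos_right key3 ht0,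
      mul_le_mul_of_nonneg_left hd1 (mul_nonneg (abs_nonneg M) (sq_nonneg t)), ht2,
      abs_nonneg M, ht0.le]
  calc M * (jap ξ - 1) ≤ |M| * (t ^ 2 / 2) := key
    _ < |lam| * t / (2 * ((d:ℝ) + t ^ 2)) := key2
    _ ≤ _ := hA


lemma japge1 {d : ℕ} (ξ : Fin d → ℝ) : 1 ≤ jap ξ := by
  have h : (0:ℝ) ≤ sqn ξ := Finset.sum_nonneg fun i _ => sq_nonneg _
  have h2 := Real.sqrt_le_sqrt (show (1:ℝ) ≤ 1 + sqn ξ by linarith)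
  rwa [Real.sqrt_one] at h2

theorem stmt17 (d : ℕ) (hd : 1 ≤ d) (lam : ℝ) (hlam : lam ≠ 0) :
    -- unboundedness of the first quotient as ξ → 0 on ℝ^d \ {0}
    (∀ M : ℝ, ∀ δ > 0, ∃ ξ : Fin d → ℝ, ξ ≠ 0 ∧ Real.sqrt (sqn ξ) < δ ∧
      M < matNorm (KGPi12 (lam1 ξ) ξ * KGBmat lam KGe1 * KGPi3 ξ) / |lam1 ξ - 1|) ∧
    -- in particular, no linear (strong transparency) bound
    (¬ ∃ C : ℝ, ∀ ξ : Fin d → ℝ,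
      matNorm (KGPi12 (lam1 ξ) ξ * KGBmat lam KGe1 * KGPi3 ξ) ≤ C * |lam1 ξ - 1|) ∧
    -- the same unboundedness for the second quotient
    (∀ M : ℝ, ∀ δ > 0, ∃ ξ : Fin d → ℝ, ξ ≠ 0 ∧ Real.sqrt (sqn ξ) < δ ∧
      M < matNorm (KGPi12 (lam2 ξ) ξ * KGBmat lam KGem1 * KGPi3 ξ) / |lam2 ξ + 1|) ∧
    (¬ ∃ C : ℝ, ∀ ξ : Fin d → ℝ,
      matNorm (KGPi12 (lam2 ξ) ξ * KGBmat lam KGem1 * KGPi3 ξ) ≤ C * |lam2 ξ + 1|) := by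
  have habs1 : ∀ ξ : Fin d → ℝ, |lam1 ξ - 1| = jap ξ - 1 := fun ξ =>
    abs_of_nonneg (by have := japge1 ξ; rw [lam1]; linarith)
  have habs2 : ∀ ξ : Fin d → ℝ, |lam2 ξ + 1| = jap ξ - 1 := fun ξ => by
    have := japge1 ξ
    rw [lam2, abs_of_nonpos (by linarith)]
    ring
  have part1 : ∀ M : ℝ, ∀ δ > 0, ∃ ξ : Fin d → ℝ, ξ ≠ 0 ∧ Real.sqrt (sqn ξ) < δ ∧
      M < matNorm (KGPi12 (lam1 ξ) ξ * KGBmat lam KGe1 * KGPi3 ξ) / |lam1 ξ - 1| := by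
    intro M δ hδ
    obtain ⟨ξ, h1, h2, h3⟩ := unbdd hd lam hlam lam1 KGe1 rfl M δ hδ
    exact ⟨ξ, h1, h2, by rwa [habs1]⟩
  have part3 : ∀ M : ℝ, ∀ δ > 0, ∃ ξ : Fin d → ℝ, ξ ≠ 0 ∧ Real.sqrt (sqn ξ) < δ ∧
      M < matNorm (KGPi12 (lam2 ξ) ξ * KGBmat lam KGem1 * KGPi3 ξ) / |lam2 ξ + 1| := by
    intro M δ hδ
    obtain ⟨ξ, h1, h2, h3⟩ := unbdd hd lam hlam lam2 KGem1 rfl M δ hδ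
    exact ⟨ξ, h1, h2, by rwa [habs2]⟩
  refine ⟨part1, ?_, part3, ?_⟩
  · rintro ⟨C, hC⟩
    obtain ⟨ξ, -, -, h3⟩ := part1 (max C 0) 1 one_pos
    have hden : 0 < |lam1 ξ - 1| := by
      rcases (abs_nonneg (lam1 ξ - 1)).lt_or_eq with h | h
      · exact h
      · exfalso
        rw [← h, div_zero] at h3
        exact absurd h3 (not_lt.mpr (le_max_right C 0))
    have h4 : matNorm (KGPi12 (lam1 ξ) ξ * KGBmat lam KGe1 * KGPi3 ξ) / |lam1 ξ - 1| ≤ C :=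
      (div_le_iff₀ hden).mpr (hC ξ)
    have := le_max_left C 0
    linarith
  · rintro ⟨C, hC⟩
    obtain ⟨ξ, -, -, h3⟩ := part3 (max C 0) 1 one_pos
    have hden : 0 < |lam2 ξ + 1| := by
      rcases (abs_nonneg (lam2 ξ + 1)).lt_or_eq with h | h
      · exact h
      · exfalso
        rw [← h, div_zero] at h3
        exact absurd h3 (not_lt.mpr (le_max_right C 0))
    have h4 : matNorm (KGPi12 (lam2 ξ) ξ * KGBmat lam KGem1 * KGPi3 ξ) / |lam2 ξ + 1| ≤ C :=
      (div_le_iff₀ hden).mpr (hC ξ)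
    have := le_max_left C 0
    linarith

end
end
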